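/- Let K be an algebraically closed field of characteristic p (hence containing F_q) equipped with a valuation v : K → ℝ ∪ {∞} (v(xy) = v(x) + v(y), v(x+y) ≥ min(v(x), v(y)), v(x) = ∞ iff x = 0). Let π ∈ K with v(π) = 1, let c_1, …, c_{h−1} ∈ K with v(c_i) ≥ 0, and set f(X) = πX + πc_1X^q + ⋯ + πc_{h−1}X^{q^{h−1}} + X^{q^h}. Let x ∈ K satisfy x^{q^h−1} = −π (so v(x) = 1/(q^h−1)). Then there is exactly one root y ∈ K of f with v(y − x) > 1/(q^h−1), and this root satisfies v(y − x) ≥ q/(q^h−1). -/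

import Mathlib

open Finset

section AuxVal

variable {K : Type*} [Field K] (v : K → WithTop ℝ)

lemma aux_v_one (hmul : ∀ x y : K, v (x * y) = v x + v y)
    (hzero : ∀ x : K, v x = ⊤ ↔ x = 0) : v 1 = 0 := by
  have h := hmul 1 1
  rw [one_mul] at h
  have h1 : v 1 ≠ ⊤ := by simp [hzero]
  lift v 1 to ℝ using h1 with r hr
  have : r = r + r := by exact_mod_cast h
  have : r = 0 := by linarith
  exact_mod_cast congrArg (fun t : ℝ => (t : WithTop ℝ)) this

lemma aux_v_neg (hmul : ∀ x y : K, v (x * y) = v x + v y)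
    (hzero : ∀ x : K, v x = ⊤ ↔ x = 0) (a : K) : v (-a) = v a := by
  have hm1 : v (-1 : K) = 0 := by
    have h := hmul (-1 : K) (-1)
    rw [neg_one_mul, neg_neg, aux_v_one v hmul hzero] at h
    have h1 : v (-1 : K) ≠ ⊤ := by simp [hzero]
    lift v (-1 : K) to ℝ using h1 with r hr
    have : (0 : ℝ) = r + r := by exact_mod_cast h
    have : r = 0 := by linarith
    exact_mod_cast congrArg (fun t : ℝ => (t : WithTop ℝ)) this
  rw [show -a = -1 * a by ring, hmul, hm1, zero_add]

lemma aux_v_pow (hmul : ∀ x y : K, v (x * y) = v x + v y)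
    (hzero : ∀ x : K, v x = ⊤ ↔ x = 0) {a : K} {r : ℝ} (ha : v a = (r : ℝ)) :
    ∀ n : ℕ, v (a ^ n) = ((n * r : ℝ) : WithTop ℝ) := by
  intro n
  induction n with
  | zero => simpa using aux_v_one v hmul hzero
  | succ n ih =>
      rw [pow_succ, hmul, ih, ha, ← WithTop.coe_add, WithTop.coe_inj]
      push_cast
      ring

lemma aux_v_add_eq (hmul : ∀ x y : K, v (x * y) = v x + v y)
    (hadd : ∀ x y : K, min (v x) (v y) ≤ v (x + y))
    (hzero : ∀ x : K, v x = ⊤ ↔ x = 0) {a b : K} (hlt : v a < v b) :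
    v (a + b) = v a := by
  have h1 : v a ≤ v (a + b) := le_trans (by rw [min_eq_left hlt.le]) (hadd a b)
  refine le_antisymm ?_ h1
  by_contra hcon
  push_neg at hcon
  have h2 : v a < min (v (a + b)) (v (-b)) := by
    rw [aux_v_neg v hmul hzero]
    exact lt_min hcon hlt
  have h3 : min (v (a + b)) (v (-b)) ≤ v ((a + b) + -b) := hadd _ _
  rw [add_neg_cancel_right] at h3
  exact absurd (lt_of_lt_of_le h2 h3) (lt_irrefl _)

lemma aux_v_sum (hadd : ∀ x y : K, min (v x) (v y) ≤ v (x + y))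
    (hzero : ∀ x : K, v x = ⊤ ↔ x = 0)
    {ι : Type*} (s : Finset ι) (g : ι → K) (C : WithTop ℝ)
    (H : ∀ i ∈ s, C ≤ v (g i)) : C ≤ v (∑ i ∈ s, g i) := by
  classical
  induction s using Finset.cons_induction with
  | empty => simp [(hzero 0).2 rfl]
  | cons a s ha ih =>
      rw [Finset.sum_cons]
      refine le_trans (le_min (H a (Finset.mem_cons_self a s)) ?_) (hadd _ _)
      exact ih fun i hi => H i (Finset.mem_cons_of_mem hi)

lemma aux_v_prod (hmul : ∀ x y : K, v (x * y) = v x + v y)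
    (hzero : ∀ x : K, v x = ⊤ ↔ x = 0)
    (τ : ℝ) (M : Multiset K) (H : ∀ r ∈ M, v r ≤ (τ : ℝ)) :
    v M.prod ≤ ((M.card * τ : ℝ) : WithTop ℝ) := by
  induction M using Multiset.induction_on with
  | empty => simpa using le_of_eq (aux_v_one v hmul hzero)
  | cons a M ih =>
      rw [Multiset.prod_cons, hmul, Multiset.card_cons]
      have h1 : v a ≤ (τ : ℝ) := H a (Multiset.mem_cons_self a M)
      have h2 := ih fun r hr => H r (Multiset.mem_cons_of_mem hr)
      calc v a + v M.prod ≤ ((τ : ℝ) : WithTop ℝ) + ((M.card * τ : ℝ) : WithTop ℝ) :=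
            add_le_add h1 h2
        _ = (((M.card + 1 : ℕ) * τ : ℝ) : WithTop ℝ) := by
            rw [← WithTop.coe_add, WithTop.coe_inj]; push_cast; ring

end AuxVal

theorem unique_root_near_canonical_point
    (p e q h : ℕ) (hp : p.Prime) (he : 1 ≤ e) (hq : q = p ^ e) (hh : 1 ≤ h)
    (K : Type*) [Field K] [IsAlgClosed K] [CharP K p]
    (v : K → WithTop ℝ)
    (hmul : ∀ x y : K, v (x * y) = v x + v y)
    (hadd : ∀ x y : K, min (v x) (v y) ≤ v (x + y))
    (hzero : ∀ x : K, v x = ⊤ ↔ x = 0)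
    (π : K) (hπ : v π = 1)
    (c : ℕ → K) (hc : ∀ i, 1 ≤ i → i ≤ h - 1 → 0 ≤ v (c i))
    (f : K → K)
    (hf : ∀ X : K,
      f X = π * X + (∑ i ∈ Finset.Ico 1 h, π * c i * X ^ q ^ i) + X ^ q ^ h)
    (x : K) (hx : x ^ (q ^ h - 1) = -π) :
    (∃! y : K, f y = 0 ∧ ((1 / ((q : ℝ) ^ h - 1) : ℝ) : WithTop ℝ) < v (y - x))
    ∧ (∀ y : K, f y = 0 → ((1 / ((q : ℝ) ^ h - 1) : ℝ) : WithTop ℝ) < v (y - x) →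
        (((q : ℝ) / ((q : ℝ) ^ h - 1) : ℝ) : WithTop ℝ) ≤ v (y - x)) := by
  classical
  haveI : Fact p.Prime := ⟨hp⟩
  -- numerics
  have hq2 : 2 ≤ q := by
    calc 2 ≤ p := hp.two_le
      _ = p ^ 1 := (pow_one p).symm
      _ ≤ p ^ e := Nat.pow_le_pow_right hp.one_lt.le he
      _ = q := hq.symm
  have hqh2 : 2 ≤ q ^ h := le_trans hq2 (Nat.le_self_pow (by omega) q)
  set Q : ℝ := (q : ℝ) ^ h with hQdef
  have hQcast : ((q ^ h : ℕ) : ℝ) = Q := by rw [hQdef]; push_cast; ring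
  have hQ2 : (2 : ℝ) ≤ Q := by rw [← hQcast]; exact_mod_cast hqh2
  set τ : ℝ := 1 / (Q - 1) with hτdef
  have hQ1 : (0 : ℝ) < Q - 1 := by linarith
  have hτpos : 0 < τ := by rw [hτdef]; positivity
  have hτ1 : (Q - 1) * τ = 1 := by rw [hτdef]; field_simp
  have hNcast : ((q ^ h - 1 : ℕ) : ℝ) = Q - 1 := by
    rw [Nat.cast_sub (by omega : 1 ≤ q ^ h), hQcast]; push_cast; ring
  have hqR : (2 : ℝ) ≤ (q : ℝ) := by exact_mod_cast hq2
  -- basic valuation facts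
  have hv1 : v (1 : K) = 0 := aux_v_one v hmul hzero
  have hvneg : ∀ a : K, v (-a) = v a := aux_v_neg v hmul hzero
  have hv0 : v (0 : K) = ⊤ := (hzero 0).2 rfl
  have hπ0 : π ≠ 0 := by
    intro hcon
    rw [hcon, hv0] at hπ
    exact absurd hπ (by simp)
  have hx0 : x ≠ 0 := by
    intro hcon
    rw [hcon, zero_pow (by omega : q ^ h - 1 ≠ 0)] at hx
    exact hπ0 (neg_eq_zero.mp hx.symm)
  have hπcoe : v π = ((1 : ℝ) : WithTop ℝ) := by rw [hπ]; norm_cast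
  -- v x = τ
  have hvx : v x = (τ : ℝ) := by
    obtain ⟨r, hr⟩ := WithTop.ne_top_iff_exists.mp (show v x ≠ ⊤ by simp [hzero, hx0])
    have hpow := aux_v_pow v hmul hzero hr.symm (q ^ h - 1)
    rw [hx, hvneg, hπcoe] at hpow
    have hNr : ((q ^ h - 1 : ℕ) : ℝ) * r = 1 := by exact_mod_cast hpow.symm
    rw [hNcast] at hNr
    have : r = τ := by
      rw [hτdef]
      field_simp
      linarith
    rw [← hr, this]
  -- additivity of f
  have hfadd : ∀ a b : K, f (a + b) = f a + f b := by
    intro a b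
    have key : ∀ (u w : K) (i : ℕ), (u + w) ^ q ^ i = u ^ q ^ i + w ^ q ^ i := by
      intro u w i
      have : q ^ i = p ^ (e * i) := by rw [hq, pow_mul]
      rw [this, add_pow_char_pow]
    rw [hf (a + b), hf a, hf b]
    simp only [key, mul_add]
    rw [Finset.sum_add_distrib]
    ring
  have hf0 : f 0 = 0 := by
    have hqi : ∀ i : ℕ, q ^ i ≠ 0 := fun i => pow_ne_zero i (by omega)
    rw [hf, Finset.sum_eq_zero (fun i _ => by rw [zero_pow (hqi i), mul_zero])]
    rw [zero_pow (hqi h)]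
    ring
  -- f x equals the middle sum
  have hfx : f x = ∑ i ∈ Finset.Ico 1 h, π * c i * x ^ q ^ i := by
    have hqh : q ^ h = (q ^ h - 1) + 1 := by omega
    rw [hf, hqh, pow_succ, hx]
    ring
  -- lower bound on v (f x)
  have hvfx : (((1 + q * τ : ℝ)) : WithTop ℝ) ≤ v (f x) := by
    rw [hfx]
    apply aux_v_sum v hadd hzero
    intro i hi
    rw [Finset.mem_Ico] at hi
    have hci := hc i hi.1 (by omega)
    have hterm : v (π * c i * x ^ q ^ i) =
        ((1 : ℝ) : WithTop ℝ) + v (c i) + (((q ^ i : ℕ) * τ : ℝ) : WithTop ℝ) := by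
      rw [hmul, hmul, hπcoe, aux_v_pow v hmul hzero hvx]
    rw [hterm]
    have hqi : (q : ℝ) ≤ ((q ^ i : ℕ) : ℝ) := by
      exact_mod_cast Nat.le_self_pow (by omega) q
    calc (((1 + q * τ : ℝ)) : WithTop ℝ)
        = ((1 : ℝ) : WithTop ℝ) + 0 + (((q : ℝ) * τ : ℝ) : WithTop ℝ) := by
          rw [add_zero, ← WithTop.coe_add]
      _ ≤ ((1 : ℝ) : WithTop ℝ) + v (c i) + (((q ^ i : ℕ) * τ : ℝ) : WithTop ℝ) := by
          refine add_le_add (add_le_add le_rfl hci) ?_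
          exact WithTop.coe_le_coe.mpr (by nlinarith)
  -- key valuation computation for f t with v t > τ
  have hkey : ∀ t : K, t ≠ 0 → ((τ : ℝ) : WithTop ℝ) < v t →
      ∃ s : ℝ, v t = (s : ℝ) ∧ τ < s ∧ v (f t) = ((1 + s : ℝ) : WithTop ℝ) := by
    intro t ht0 htτ
    obtain ⟨s, hs⟩ := WithTop.ne_top_iff_exists.mp (show v t ≠ ⊤ by simp [hzero, ht0])
    have hτs : τ < s := by
      rw [← hs] at htτ
      exact_mod_cast htτ
    have hs0 : 0 < s := lt_trans hτpos hτs
    refine ⟨s, hs.symm, hτs, ?_⟩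
    have hft : f t = π * t +
        ((∑ i ∈ Finset.Ico 1 h, π * c i * t ^ q ^ i) + t ^ q ^ h) := by
      rw [hf]; ring
    have h1 : v (π * t) = ((1 + s : ℝ) : WithTop ℝ) := by
      rw [hmul, hπcoe, ← hs, ← WithTop.coe_add]
    have h2 : (((1 + q * s : ℝ)) : WithTop ℝ) ≤
        v (∑ i ∈ Finset.Ico 1 h, π * c i * t ^ q ^ i) := by
      apply aux_v_sum v hadd hzero
      intro i hi
      rw [Finset.mem_Ico] at hi
      have hci := hc i hi.1 (by omega)
      have hterm : v (π * c i * t ^ q ^ i) =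
          ((1 : ℝ) : WithTop ℝ) + v (c i) + (((q ^ i : ℕ) * s : ℝ) : WithTop ℝ) := by
        rw [hmul, hmul, hπcoe, aux_v_pow v hmul hzero hs.symm]
      rw [hterm]
      have hqi : (q : ℝ) ≤ ((q ^ i : ℕ) : ℝ) := by
        exact_mod_cast Nat.le_self_pow (by omega) q
      calc (((1 + q * s : ℝ)) : WithTop ℝ)
          = ((1 : ℝ) : WithTop ℝ) + 0 + (((q : ℝ) * s : ℝ) : WithTop ℝ) := by
            rw [add_zero, ← WithTop.coe_add]
        _ ≤ ((1 : ℝ) : WithTop ℝ) + v (c i) + (((q ^ i : ℕ) * s : ℝ) : WithTop ℝ) := by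
            refine add_le_add (add_le_add le_rfl hci) ?_
            exact WithTop.coe_le_coe.mpr (by nlinarith)
    have h3 : v (t ^ q ^ h) = (((q ^ h : ℕ) * s : ℝ) : WithTop ℝ) :=
      aux_v_pow v hmul hzero hs.symm (q ^ h)
    have hlt2 : (((1 + s : ℝ)) : WithTop ℝ) < (((1 + q * s : ℝ)) : WithTop ℝ) :=
      WithTop.coe_lt_coe.mpr (by nlinarith)
    have hlt3 : (((1 + s : ℝ)) : WithTop ℝ) < v (t ^ q ^ h) := by
      rw [h3]
      apply WithTop.coe_lt_coe.mpr
      rw [hQcast]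
      nlinarith
    have hmin : (((1 + s : ℝ)) : WithTop ℝ) <
        v ((∑ i ∈ Finset.Ico 1 h, π * c i * t ^ q ^ i) + t ^ q ^ h) :=
      lt_of_lt_of_le (lt_min (lt_of_lt_of_le hlt2 h2) hlt3) (hadd _ _)
    rw [hft, aux_v_add_eq v hmul hadd hzero (h1 ▸ hmin : v (π * t) < _)]
    exact h1
  -- existence
  have hex : ∃ y : K, f y = 0 ∧ ((τ : ℝ) : WithTop ℝ) < v (y - x) := by
    by_cases hfx0 : f x = 0
    · exact ⟨x, hfx0, by rw [sub_self, hv0]; exact WithTop.coe_lt_top _⟩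
    · set P : Polynomial K := Polynomial.X ^ q ^ h +
        (Polynomial.C π * Polynomial.X +
          ((∑ i ∈ Finset.Ico 1 h, Polynomial.C (π * c i) * Polynomial.X ^ q ^ i) +
            Polynomial.C (f x))) with hP
      have hdR : (Polynomial.C π * Polynomial.X +
          ((∑ i ∈ Finset.Ico 1 h, Polynomial.C (π * c i) * Polynomial.X ^ q ^ i) +
            Polynomial.C (f x)) : Polynomial K).degree < ((q ^ h : ℕ) : WithBot ℕ) := by
        have hb : (⊥ : WithBot ℕ) < ((q ^ h : ℕ) : WithBot ℕ) := by
          exact bot_lt_iff_ne_bot.mpr (by exact_mod_cast WithBot.coe_ne_bot)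
        refine lt_of_le_of_lt (Polynomial.degree_add_le _ _) (max_lt ?_ ?_)
        · refine lt_of_le_of_lt (Polynomial.degree_C_mul_X_le π) ?_
          exact_mod_cast (by omega : (1 : ℕ) < q ^ h)
        · refine lt_of_le_of_lt (Polynomial.degree_add_le _ _) (max_lt ?_ ?_)
          · refine lt_of_le_of_lt (Polynomial.degree_sum_le _ _) ?_
            rw [Finset.sup_lt_iff hb]
            intro i hi
            rw [Finset.mem_Ico] at hi
            refine lt_of_le_of_lt (Polynomial.degree_C_mul_X_pow_le _ _) ?_
            exact_mod_cast Nat.pow_lt_pow_right (by omega) hi.2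
          · refine lt_of_le_of_lt (Polynomial.degree_C_le) ?_
            exact_mod_cast (by omega : (0 : ℕ) < q ^ h)
      have hPm : P.Monic := Polynomial.monic_X_pow_add hdR
      have hP0 : P ≠ 0 := hPm.ne_zero
      have hPdeg : P.degree = ((q ^ h : ℕ) : WithBot ℕ) := by
        rw [hP, Polynomial.degree_add_eq_left_of_degree_lt
          (by rw [Polynomial.degree_X_pow]; exact hdR), Polynomial.degree_X_pow]
      have hPnat : P.natDegree = q ^ h := Polynomial.natDegree_eq_of_degree_eq_some hPdeg
      have hsplit : P.Splits := IsAlgClosed.splits P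
      have hcard : P.roots.card = q ^ h := by
        rw [← hPnat]
        exact Polynomial.splits_iff_card_roots.mp hsplit
      have hprod := Polynomial.prod_multiset_X_sub_C_of_monic_of_roots_card_eq hPm
        (by rw [hPnat, hcard])
      have heval : ∀ t : K, P.eval t = f t + f x := by
        intro t
        rw [hP]
        simp only [Polynomial.eval_add, Polynomial.eval_mul, Polynomial.eval_pow,
          Polynomial.eval_X, Polynomial.eval_C, Polynomial.eval_finset_sum]
        rw [hf t]
        ring
      have heval0 : P.eval 0 = f x := by rw [heval, hf0, zero_add]
      have hprod0 : f x = (P.roots.map fun a => -a).prod := by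
        conv_lhs => rw [← heval0, ← hprod]
        rw [Polynomial.eval_multiset_prod, Multiset.map_map]
        exact congrArg Multiset.prod (Multiset.map_congr rfl (fun a _ => by simp))
      by_contra hcon
      push_neg at hcon
      have hroots : ∀ r ∈ P.roots, v r ≤ ((τ : ℝ) : WithTop ℝ) := by
        intro r hr
        have hroot : P.eval r = 0 := (Polynomial.mem_roots hP0).mp hr
        rw [heval] at hroot
        have hfy : f (x + r) = 0 := by
          rw [hfadd]
          linear_combination hroot
        have := hcon (x + r) hfy
        simpa [add_sub_cancel_left] using this
      have hmapped : ∀ z ∈ P.roots.map (fun a => -a), v z ≤ ((τ : ℝ) : WithTop ℝ) := by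
        intro z hz
        obtain ⟨r, hr, rfl⟩ := Multiset.mem_map.mp hz
        rw [hvneg]
        exact hroots r hr
      have hle := aux_v_prod v hmul hzero τ _ hmapped
      rw [← hprod0, Multiset.card_map, hcard] at hle
      have hcomb := le_trans hvfx hle
      have hreal : 1 + (q : ℝ) * τ ≤ ((q ^ h : ℕ) : ℝ) * τ := WithTop.coe_le_coe.mp hcomb
      rw [hQcast] at hreal
      nlinarith
  -- assemble
  obtain ⟨y, hy1, hy2⟩ := hex
  constructor
  · refine ⟨y, ⟨hy1, hy2⟩, ?_⟩
    rintro z ⟨hz1, hz2⟩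
    by_contra hne
    have hd0 : z - y ≠ 0 := sub_ne_zero.mpr hne
    have hdv : ((τ : ℝ) : WithTop ℝ) < v (z - y) := by
      have hsplit : z - y = (z - x) + (x - y) := by ring
      rw [hsplit]
      have h2 : ((τ : ℝ) : WithTop ℝ) < v (x - y) := by
        rw [show x - y = -(y - x) by ring, hvneg]
        exact hy2
      exact lt_of_lt_of_le (lt_min hz2 h2) (hadd _ _)
    have hfd : f (z - y) = 0 := by
      have hzz := hfadd (z - y) y
      rw [sub_add_cancel, hz1, hy1] at hzz
      linear_combination -hzz
    obtain ⟨s, _, _, hfs⟩ := hkey (z - y) hd0 hdv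
    rw [hfd, hv0] at hfs
    exact WithTop.top_ne_coe hfs
  · intro y' hy'1 hy'2
    have hgoal_eq : ((q : ℝ) / ((q : ℝ) ^ h - 1) : ℝ) = (q : ℝ) * τ := by
      rw [hτdef, mul_one_div]
    rw [hgoal_eq]
    by_cases ht0 : y' - x = 0
    · rw [ht0, hv0]; exact le_top
    · obtain ⟨s, hs, hτs, hfs⟩ := hkey (y' - x) ht0 hy'2
      have hfteq : f (y' - x) = -f x := by
        have hzz := hfadd (y' - x) x
        rw [sub_add_cancel, hy'1] at hzz
        linear_combination -hzz
      have hveq : v (f (y' - x)) = v (f x) := by rw [hfteq, hvneg]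
      rw [hfs] at hveq
      have hge := hvfx
      rw [← hveq] at hge
      have hreal : 1 + (q : ℝ) * τ ≤ 1 + s := WithTop.coe_le_coe.mp hge
      rw [hs]
      exact WithTop.coe_le_coe.mpr (by linarith)
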